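/- Let d ≥ 2 be an integer and γ ∈ ℂ, and suppose that f_γ(z) = z^d + γ has a parabolic periodic point in ℂ, i.e., there exist z₀ ∈ ℂ and m ≥ 1 with f_γ^{∘m}(z₀) = z₀ such that (f_γ^{∘m})'(z₀) is a root of unity. Then d^d γ^{d−1} is an algebraic integer. In particular, if in addition γ ∈ ℚ, then d^d γ^{d−1} ∈ ℤ. -/

import Mathlib

open Polynomial

private lemma isIntegral_of_mem_adjoin_inv {K : Type*} [Field K] {x : K} (hx : x ≠ 0)
    (h : x ∈ Algebra.adjoin ℤ ({x⁻¹} : Set K)) : IsIntegral ℤ x := by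
  rw [Algebra.adjoin_singleton_eq_range_aeval, AlgHom.mem_range] at h
  obtain ⟨p, hp⟩ := h
  set n := p.natDegree with hn
  refine ⟨X ^ (n + 1) - ∑ i ∈ Finset.range (n + 1), C (p.coeff i) * X ^ (n - i), ?_, ?_⟩
  · apply monic_X_pow_sub
    apply lt_of_le_of_lt (Polynomial.degree_sum_le _ _)
    rw [Finset.sup_lt_iff (by exact WithBot.bot_lt_coe _)]
    intro i hi
    refine lt_of_le_of_lt (degree_C_mul_X_pow_le _ _) ?_
    exact_mod_cast Nat.lt_succ_of_le (Nat.sub_le n i)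
  · have hsum : x = ∑ i ∈ Finset.range (n + 1), (p.coeff i : K) * (x⁻¹) ^ i := by
      conv_lhs => rw [← hp]
      rw [aeval_eq_sum_range]
      simp [zsmul_eq_mul]
      rfl
    have key : x ^ (n + 1) = ∑ i ∈ Finset.range (n + 1), (p.coeff i : K) * x ^ (n - i) := by
      calc x ^ (n + 1) = x ^ n * x := by ring
        _ = x ^ n * ∑ i ∈ Finset.range (n + 1), (p.coeff i : K) * (x⁻¹) ^ i := by rw [← hsum]
        _ = ∑ i ∈ Finset.range (n + 1), (p.coeff i : K) * (x ^ n * (x⁻¹) ^ i) := by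
            rw [Finset.mul_sum]; apply Finset.sum_congr rfl; intro i _; ring
        _ = ∑ i ∈ Finset.range (n + 1), (p.coeff i : K) * x ^ (n - i) := by
            apply Finset.sum_congr rfl
            intro i hi
            rw [Finset.mem_range, Nat.lt_succ_iff] at hi
            rw [pow_sub₀ x hx hi, inv_pow]
    rw [eval₂_sub, eval₂_X_pow, eval₂_finset_sum]
    simp only [eval₂_mul, eval₂_C, eval₂_X_pow]
    rw [key]
    simp [sub_eq_zero]

private lemma isIntegral_of_forall_valuationSubring {K : Type*} [Field K] {x : K}
    (h : ∀ V : ValuationSubring K, x ∈ V) : IsIntegral ℤ x := by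
  by_contra hx
  have hx0 : x ≠ 0 := by rintro rfl; exact hx isIntegral_zero
  set y := x⁻¹ with hy
  set S : Subring K := (Algebra.adjoin ℤ ({y} : Set K)).toSubring with hS
  have hyS : y ∈ S := Algebra.self_mem_adjoin_singleton ℤ y
  have hnu : ¬ IsUnit (⟨y, hyS⟩ : S) := by
    intro hu
    obtain ⟨z, hz⟩ := isUnit_iff_exists_inv.mp hu
    have hz' : y * (z : K) = 1 := congrArg Subtype.val hz
    have hzx : (z : K) = x := by
      field_simp [hy] at hz'
      rw [hy] at hz'
      calc (z : K) = x * (x⁻¹ * z) := by rw [← mul_assoc, mul_inv_cancel₀ hx0, one_mul]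
        _ = x := by rw [hz', mul_one]
    have hxS : x ∈ S := hzx ▸ z.2
    exact hx (isIntegral_of_mem_adjoin_inv hx0 (Subalgebra.mem_toSubring.mp hxS))
  have hspan : Ideal.span {(⟨y, hyS⟩ : S)} ≠ ⊤ := by
    rwa [Ne, Ideal.span_singleton_eq_top]
  obtain ⟨M, hM, hMy⟩ := Ideal.exists_le_maximal _ hspan
  have hyM : (⟨y, hyS⟩ : S) ∈ M := hMy (Ideal.subset_span rfl)
  obtain ⟨V, hV⟩ := (LocalSubring.ofPrime S M).exists_le_valuationSubring
  obtain ⟨hle, hloc⟩ := hV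
  have hyO : y ∈ (LocalSubring.ofPrime S M).toSubring := LocalSubring.le_ofPrime S M hyS
  have hxV : x ∈ V.toSubring := h V
  have hyV : y ∈ V.toSubring := hle hyO
  have hunitV : IsUnit (⟨y, hyV⟩ : V.toSubring) := by
    refine isUnit_iff_exists_inv.mpr ⟨⟨x, hxV⟩, ?_⟩
    ext
    simp [hy, inv_mul_cancel₀ hx0]
  have hunitO : IsUnit (⟨y, hyO⟩ : (LocalSubring.ofPrime S M).toSubring) :=
    hloc.map_nonunit _ hunitV
  have hnotM := (IsLocalization.AtPrime.isUnit_to_map_iff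
      ((LocalSubring.ofPrime S M).toSubring) M (⟨y, hyS⟩ : S)).mp hunitO
  exact hnotM hyM

private lemma lt_pow_self_of_one_lt {G : Type*} [LinearOrderedCommGroupWithZero G] {a : G}
    {d : ℕ} (ha : 1 < a) (hd : 2 ≤ d) : a < a ^ d := by
  calc a = a ^ 1 := (pow_one a).symm
  _ < a ^ d := pow_lt_pow_right₀ ha (by omega)

theorem integrality_of_parabolic_parameters (d : ℕ) (hd : 2 ≤ d) (γ : ℂ)
    -- f_γ(z) = z^d + γ has a parabolic m-periodic point:
    (h : ∃ z₀ : ℂ, ∃ m : ℕ, 1 ≤ m ∧ (fun z : ℂ => z ^ d + γ)^[m] z₀ = z₀ ∧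
      ∃ j : ℕ, 0 < j ∧ (deriv ((fun z : ℂ => z ^ d + γ)^[m]) z₀) ^ j = 1) :
    -- then d^d γ^{d−1} is an algebraic integer …
    IsIntegral ℤ ((d : ℂ) ^ d * γ ^ (d - 1)) ∧
    -- … and if moreover γ is rational, then d^d γ^{d−1} is an integer:
    (∀ q : ℚ, γ = (q : ℂ) → ∃ a : ℤ, (d : ℚ) ^ d * q ^ (d - 1) = (a : ℚ)) := by
  set f : ℂ → ℂ := fun z => z ^ d + γ with hf
  obtain ⟨z₀, m, hm, hper, j, hj, hmul⟩ := h
  have hfd : Differentiable ℂ f := (differentiable_pow d).add_const γ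
  have hdiff : ∀ n : ℕ, Differentiable ℂ f^[n] := by
    intro n
    induction n with
    | zero => simpa using differentiable_id
    | succ n ih =>
      rw [Function.iterate_succ']
      exact hfd.comp ih
  have hderiv : ∀ n : ℕ, deriv f^[n] z₀ =
      ∏ i ∈ Finset.range n, ((d : ℂ) * (f^[i] z₀) ^ (d - 1)) := by
    intro n
    induction n with
    | zero => simp
    | succ n ih =>
      rw [Function.iterate_succ', Finset.prod_range_succ, ← ih]
      rw [deriv_comp _ (hfd _) ((hdiff n) _)]
      have : deriv f (f^[n] z₀) = (d : ℂ) * (f^[n] z₀) ^ (d - 1) := by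
        simp [hf, deriv_add_const, deriv_pow]
      rw [this]
      ring
  have key : IsIntegral ℤ ((d : ℂ) ^ d * γ ^ (d - 1)) := by
    apply isIntegral_of_forall_valuationSubring
    intro V
    by_contra hxV
    set v := V.valuation with hv
    set z : ℕ → ℂ := fun i => f^[i] z₀ with hz
    have hgt : 1 < v ((d : ℂ) ^ d * γ ^ (d - 1)) := by
      rw [← not_le]
      intro hle
      exact hxV (V.mem_of_valuation_le_one _ hle)
    have hvd : v (d : ℂ) ≤ 1 := by
      rw [ValuationSubring.valuation_le_one_iff]
      exact_mod_cast natCast_mem V.toSubring d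
    have hvx : v ((d : ℂ) ^ d * γ ^ (d - 1)) = v (d : ℂ) ^ d * v γ ^ (d - 1) := by
      rw [map_mul, map_pow, map_pow]
    have hvγ : 1 < v γ := by
      by_contra hle
      push_neg at hle
      have : v ((d : ℂ) ^ d * γ ^ (d - 1)) ≤ 1 := by
        rw [hvx]
        exact mul_le_one' (pow_le_one' hvd d) (pow_le_one' hle (d - 1))
      exact absurd hgt (not_lt.mpr this)
    have hzper : ∀ i, z (i + m) = z i := by
      intro i
      show f^[i + m] z₀ = f^[i] z₀
      rw [Function.iterate_add_apply, hper]
    have hstep : ∀ i, z (i + 1) = (z i) ^ d + γ := by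
      intro i
      show f^[i + 1] z₀ = (f^[i] z₀) ^ d + γ
      rw [Function.iterate_succ_apply']
    have growth : ∀ i, v γ < v (z i) ^ d →
        v γ < v (z (i + 1)) ^ d ∧ v (z i) < v (z (i + 1)) := by
      intro i hi
      have h1 : 1 < v (z i) := by
        by_contra hle
        push_neg at hle
        exact absurd (hvγ.trans hi) (not_lt.mpr (pow_le_one' hle d))
      have hne : v ((z i) ^ d) ≠ v γ := by rw [map_pow]; exact hi.ne'
      have hadd : v (z (i + 1)) = v (z i) ^ d := by
        rw [hstep i, Valuation.map_add_of_distinct_val v hne, map_pow,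
          max_eq_left hi.le]
      refine ⟨?_, ?_⟩
      · rw [hadd]
        exact hi.trans_le (le_self_pow₀ ((hvγ.trans hi).le) (by omega))
      · rw [hadd]
        exact lt_pow_self_of_one_lt h1 hd
    have claim1 : ∀ i, v (z i) ^ d ≤ v γ := by
      intro i
      by_contra hlt
      push_neg at hlt
      have it : ∀ k : ℕ, v γ < v (z (i + k)) ^ d ∧ v (z i) < v (z (i + k + 1)) := by
        intro k
        induction k with
        | zero => exact ⟨hlt, (growth i hlt).2⟩
        | succ k ih =>
          have g := growth (i + k) ih.1
          exact ⟨g.1, lt_trans ih.2 (growth (i + k + 1) g.1).2⟩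
      have hcontr := (it (m - 1)).2
      rw [show i + (m - 1) + 1 = i + m by omega, hzper i] at hcontr
      exact lt_irrefl _ hcontr
    have claim2 : ∀ i, v (z i) ^ d = v γ := by
      intro i
      rcases lt_or_eq_of_le (claim1 i) with hlt | heq
      · exfalso
        have hne : v ((z i) ^ d) ≠ v γ := by rw [map_pow]; exact hlt.ne
        have hadd : v (z (i + 1)) = v γ := by
          rw [hstep i, Valuation.map_add_of_distinct_val v hne, map_pow,
            max_eq_right hlt.le]
        have : v γ < v (z (i + 1)) ^ d := by
          rw [hadd]
          exact lt_pow_self_of_one_lt hvγ hd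
        exact absurd (claim1 (i + 1)) (not_le.mpr this)
      · exact heq
    -- the multiplier has valuation one
    have hvlam1 : v (deriv f^[m] z₀) = 1 := by
      have hpow : v (deriv f^[m] z₀) ^ j = 1 := by
        rw [← map_pow, hmul, map_one]
      rcases lt_trichotomy (v (deriv f^[m] z₀)) 1 with hlt | he | hgt'
      · exact absurd hpow (by simpa using (pow_lt_one₀ zero_le' hlt hj.ne').ne)
      · exact he
      · exact absurd hpow (one_lt_pow₀ hgt' hj.ne').ne'
    have hcomp : v (deriv f^[m] z₀) ^ d = (v ((d : ℂ) ^ d * γ ^ (d - 1))) ^ m := by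
      rw [hderiv m, map_prod, ← Finset.prod_pow]
      have heach : ∀ i ∈ Finset.range m,
          (v ((d : ℂ) * (z i) ^ (d - 1))) ^ d = v ((d : ℂ) ^ d * γ ^ (d - 1)) := by
        intro i _
        rw [map_mul, map_pow, mul_pow, ← pow_mul, mul_comm (d - 1) d, pow_mul,
          claim2 i, hvx]
      rw [Finset.prod_congr rfl heach, Finset.prod_const, Finset.card_range]
    have hone : (1 : _) = (v ((d : ℂ) ^ d * γ ^ (d - 1))) ^ m := by
      rw [← hcomp, hvlam1, one_pow]
    have : 1 < (v ((d : ℂ) ^ d * γ ^ (d - 1))) ^ m := one_lt_pow₀ hgt (by omega)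
    exact absurd hone.symm this.ne'
  refine ⟨key, ?_⟩
  rintro q rfl
  have hQ : IsIntegral ℤ ((d : ℚ) ^ d * q ^ (d - 1)) := by
    apply IsIntegral.tower_bot_of_field (B := ℂ)
    have : algebraMap ℚ ℂ ((d : ℚ) ^ d * q ^ (d - 1)) = (d : ℂ) ^ d * (q : ℂ) ^ (d - 1) := by
      rw [eq_ratCast]
      push_cast
      ring
    rw [this]
    exact key
  obtain ⟨a, ha⟩ := IsIntegrallyClosed.isIntegral_iff.mp hQ
  exact ⟨a, by rw [← ha]; simp⟩
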